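/- For every Grand Dyck path γ of semilength n, the number of Grand Dyck paths of semilength n that cover γ in the Grand Dyck lattice GD_n equals the number of occurrences of the factor DU in γ, and the number of Grand Dyck paths of semilength n covered by γ equals the number of occurrences of the factor UD in γ. -/

import Mathlib

/-- Steps of a (Grand) Dyck path: up `U = (1,1)` and down `D = (1,-1)`. -/
inductive Step : Type
  | U : Step
  | D : Step
  deriving DecidableEq

/-- The height of a path: number of up steps minus number of down steps. -/
def height (w : List Step) : ℤ := (w.count Step.U : ℤ) - (w.count Step.D : ℤ)

/-- A Dyck path of semilength `n`: a word of length `2n` with `n` up steps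
(hence `n` down steps) all of whose prefixes have nonnegative height. -/
def IsDyck (n : ℕ) (w : List Step) : Prop :=
  w.length = 2 * n ∧ w.count Step.U = n ∧ ∀ i : ℕ, 0 ≤ height (w.take i)

/-- A Grand Dyck path of semilength `n`: a word of length `2n` with `n` up steps. -/
def IsGrandDyck (n : ℕ) (w : List Step) : Prop :=
  w.length = 2 * n ∧ w.count Step.U = n

/-- The order on paths: pointwise comparison of the heights after each number of steps. -/
def PathLe (w w' : List Step) : Prop :=
  ∀ i : ℕ, height (w.take i) ≤ height (w'.take i)

/-- Strict order on paths. -/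
def PathLt (w w' : List Step) : Prop := PathLe w w' ∧ ¬ PathLe w' w

/-- `Covers P w w'` : within the class of paths satisfying `P`, the path `w'` covers `w`,
i.e. `w < w'` and no path of the class lies strictly between them. -/
def Covers (P : List Step → Prop) (w w' : List Step) : Prop :=
  P w ∧ P w' ∧ PathLt w w' ∧ ∀ z : List Step, P z → ¬ (PathLt w z ∧ PathLt z w')

/-- Number of occurrences of the factor `xy` in the word `w`. -/
def countFactor (x y : Step) (w : List Step) : ℕ :=
  ((Finset.range w.length).filter
    (fun i => w[i]? = some x ∧ w[i + 1]? = some y)).card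

/-- Number of occurrences of the factor `xy` in the word `w` whose starting height
(the height after the first `i` steps, the factor occupying positions `i` and `i+1`,
`0`-indexed) is at least `1`. -/
def countFactorHigh (x y : Step) (w : List Step) : ℕ :=
  ((Finset.range w.length).filter
    (fun i => w[i]? = some x ∧ w[i + 1]? = some y ∧ 1 ≤ height (w.take i))).card

namespace GDaux

/-- The signed value of a step. -/
def sig : Step → ℤ
  | Step.U => 1
  | Step.D => -1

lemma sig_bound (s : Step) : sig s = 1 ∨ sig s = -1 := by cases s <;> simp [sig]

lemma eq_D_of_sig {s : Step} (h : sig s = -1) : s = Step.D := by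
  cases s <;> simp_all [sig]

lemma eq_U_of_sig {s : Step} (h : sig s = 1) : s = Step.U := by
  cases s <;> simp_all [sig]

lemma count_total (w : List Step) : w.count Step.U + w.count Step.D = w.length := by
  induction w with
  | nil => simp
  | cons x t ih => cases x <;> simp [List.count_cons] <;> omega

lemma height_append (u v : List Step) : height (u ++ v) = height u + height v := by
  simp only [height, List.count_append]
  push_cast
  ring

lemma height_cons (x : Step) (l : List Step) : height (x :: l) = sig x + height l := by
  cases x <;> simp [height, List.count_cons, sig] <;> ring

lemma height_singleton (x : Step) : height [x] = sig x := by
  cases x <;> simp [height, sig]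

lemma height_take_parity (w : List Step) (i : ℕ) :
    height (w.take i) = 2 * ((w.take i).count Step.U : ℤ) - (min i w.length : ℤ) := by
  have h := count_total (w.take i)
  have hl : (w.take i).length = min i w.length := List.length_take
  rw [hl] at h
  unfold height
  omega

lemma gap2 {w w' : List Step} (hl : w.length = w'.length) {i : ℕ}
    (h : height (w.take i) < height (w'.take i)) :
    height (w.take i) + 2 ≤ height (w'.take i) := by
  have h1 := height_take_parity w i
  have h2 := height_take_parity w' i
  rw [hl] at h1
  omega

lemma step_height' (w : List Step) (i : ℕ) (h : i < w.length) :
    ∃ x : Step, w[i]? = some x ∧ height (w.take (i + 1)) = height (w.take i) + sig x := by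
  refine ⟨w.get ⟨i, h⟩, List.getElem?_eq_getElem h, ?_⟩
  rw [List.take_succ, List.getElem?_eq_getElem h]
  simp only [Option.toList_some]
  rw [height_append, height_singleton]
  rfl

lemma eq_of_heights {w w' : List Step} (hl : w.length = w'.length)
    (h : ∀ i, height (w.take i) = height (w'.take i)) : w = w' := by
  apply List.ext_get hl
  intro i h1 h2
  obtain ⟨x, hx, ex⟩ := step_height' w i h1
  obtain ⟨y, hy, ey⟩ := step_height' w' i h2
  have hi := h i
  have hi1 := h (i + 1)
  have hs : sig x = sig y := by omega
  have : x = y := by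
    rcases sig_bound x with h' | h' <;> rcases sig_bound y with h'' | h''
    · rw [eq_U_of_sig h', eq_U_of_sig h'']
    · omega
    · omega
    · rw [eq_D_of_sig h', eq_D_of_sig h'']
  rw [List.getElem?_eq_getElem h1] at hx
  rw [List.getElem?_eq_getElem h2] at hy
  rw [List.get_eq_getElem, List.get_eq_getElem, Option.some.inj hx, Option.some.inj hy, this]

lemma height_take_swap (a b : List Step) (j : ℕ) :
    height ((a ++ Step.U :: Step.D :: b).take j) =
    height ((a ++ Step.D :: Step.U :: b).take j) + (if j = a.length + 1 then 2 else 0) := by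
  rw [List.take_append, List.take_append,
      height_append, height_append]
  rcases Nat.lt_trichotomy j (a.length + 1) with h | h | h
  · have h0 : j - a.length = 0 := by omega
    rw [h0, if_neg (by omega)]
    simp
  · rw [h, if_pos rfl]
    have h1 : a.length + 1 - a.length = 1 := by omega
    rw [h1]
    simp only [List.take_succ_cons, List.take_zero]
    rw [height_singleton, height_singleton]
    simp [sig]
    ring
  · have h2 : j - a.length = (j - a.length - 2) + 1 + 1 := by omega
    rw [h2, if_neg (by omega), List.take_succ_cons, List.take_succ_cons,
        List.take_succ_cons, List.take_succ_cons, height_cons, height_cons,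
        height_cons, height_cons]
    simp [sig]

lemma grandDyck_swap {n : ℕ} {a b : List Step}
    (h : IsGrandDyck n (a ++ Step.D :: Step.U :: b)) :
    IsGrandDyck n (a ++ Step.U :: Step.D :: b) := by
  obtain ⟨h1, h2⟩ := h
  constructor
  · simpa using h1
  · simp only [List.count_append, List.count_cons] at h2 ⊢
    simpa using h2

lemma covers_swap {n : ℕ} {a b : List Step}
    (hγ : IsGrandDyck n (a ++ Step.D :: Step.U :: b)) :
    Covers (IsGrandDyck n) (a ++ Step.D :: Step.U :: b) (a ++ Step.U :: Step.D :: b) := by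
  have hz : IsGrandDyck n (a ++ Step.U :: Step.D :: b) := grandDyck_swap hγ
  have hts := height_take_swap a b
  refine ⟨hγ, hz, ⟨?_, ?_⟩, ?_⟩
  · intro i
    have ht := hts i
    by_cases h : i = a.length + 1
    · rw [if_pos h] at ht; omega
    · rw [if_neg h] at ht; omega
  · intro hle
    have h1 := hle (a.length + 1)
    have h2 := hts (a.length + 1)
    rw [if_pos rfl] at h2
    omega
  · rintro y hy ⟨⟨hle1, hne1⟩, ⟨hle2, hne2⟩⟩
    have hylen : y.length = (a ++ Step.D :: Step.U :: b).length := by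
      rw [hy.1, hγ.1]
    have hall : ∀ i, i ≠ a.length + 1 →
        height (y.take i) = height ((a ++ Step.D :: Step.U :: b).take i) := by
      intro i hi
      have l1 := hle1 i
      have l2 := hle2 i
      have ht := hts i
      rw [if_neg hi] at ht
      omega
    have hcase : height (y.take (a.length + 1)) =
          height ((a ++ Step.D :: Step.U :: b).take (a.length + 1)) ∨
        height (y.take (a.length + 1)) =
          height ((a ++ Step.U :: Step.D :: b).take (a.length + 1)) := by
      have p1 := height_take_parity y (a.length + 1)
      have p2 := height_take_parity (a ++ Step.D :: Step.U :: b) (a.length + 1)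
      have l1 := hle1 (a.length + 1)
      have l2 := hle2 (a.length + 1)
      have ht := hts (a.length + 1)
      rw [if_pos rfl] at ht
      rw [hylen] at p1
      omega
    rcases hcase with hc | hc
    · apply hne1
      intro i
      by_cases hi : i = a.length + 1
      · rw [hi, hc]
      · rw [hall i hi]
    · apply hne2
      intro i
      by_cases hi : i = a.length + 1
      · rw [hi]
        exact le_of_eq hc.symm
      · have ht := hts i
        rw [if_neg hi] at ht
        rw [ht, add_zero, hall i hi]

lemma decomp_of_get? {w : List Step} {i : ℕ} {x y : Step}
    (hx : w[i]? = some x) (hy : w[i + 1]? = some y) :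
    w = w.take i ++ x :: y :: w.drop (i + 2) := by
  obtain ⟨h1, hg1⟩ := List.getElem?_eq_some_iff.mp hy
  have h0 : i < w.length := by omega
  conv_lhs => rw [← List.take_append_drop i w]
  congr 1
  rw [List.drop_eq_getElem_cons h0, List.drop_eq_getElem_cons h1]
  have e0 : w[i] = x := by
    rw [List.getElem?_eq_getElem h0] at hx
    exact Option.some.inj hx
  have e1 : w[i + 1] = y := by
    rw [List.getElem?_eq_getElem h1] at hy
    exact Option.some.inj hy
  rw [e0, e1]

lemma get?_of_decomp (a b : List Step) (x y : Step) :
    (a ++ x :: y :: b)[a.length]? = some x ∧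
    (a ++ x :: y :: b)[a.length + 1]? = some y := by
  constructor
  · rw [List.getElem?_append_right (le_refl _)]
    simp
  · rw [List.getElem?_append_right (by omega)]
    have h1 : a.length + 1 - a.length = 1 := by omega
    rw [h1]
    simp

lemma exists_du_between {n : ℕ} {γ w : List Step} (hγ : IsGrandDyck n γ)
    (hw : IsGrandDyck n w) (hle : PathLe γ w) (hne : ¬ PathLe w γ) :
    ∃ a b : List Step, γ = a ++ Step.D :: Step.U :: b ∧
      PathLe (a ++ Step.U :: Step.D :: b) w := by
  classical
  obtain ⟨hγl, hγc⟩ := hγ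
  obtain ⟨hwl, hwc⟩ := hw
  have hlen : γ.length = w.length := by omega
  have hend : ∀ i, 2 * n ≤ i → height (γ.take i) = height (w.take i) := by
    intro i hi
    rw [List.take_of_length_le (by omega), List.take_of_length_le (by omega)]
    have c1 := count_total γ
    have c2 := count_total w
    unfold height
    omega
  have hP : ∃ i, height (γ.take i) < height (w.take i) := by
    obtain ⟨i0, hi0⟩ := not_forall.mp hne
    exact ⟨i0, lt_of_not_ge hi0⟩
  obtain ⟨j, hPj, hminj⟩ : ∃ j, height (γ.take j) < height (w.take j) ∧
      ∀ m, m < j → ¬ height (γ.take m) < height (w.take m) :=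
    ⟨Nat.find hP, Nat.find_spec hP, fun m hm => Nat.find_min hP hm⟩
  have hmin : ∀ m, m < j → height (γ.take m) = height (w.take m) := by
    intro m hm
    have h1 := hminj m hm
    have h2 := hle m
    omega
  have hjle : j ≤ 2 * n := by
    by_contra hcon
    push_neg at hcon
    have := hend j (by omega)
    omega
  have hj0 : 0 < j := by
    rcases Nat.eq_zero_or_pos j with h | h
    · rw [h] at hPj
      simp [height] at hPj
    · exact h
  have hj1 : j - 1 < γ.length := by omega
  obtain ⟨x1, hx1, e1⟩ := step_height' γ (j - 1) hj1
  obtain ⟨y1, hy1, e2⟩ := step_height' w (j - 1) (by omega)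
  rw [Nat.sub_add_cancel hj0] at e1 e2
  have heq := hmin (j - 1) (by omega)
  have hgap := gap2 hlen hPj
  have hx1D : x1 = Step.D := by
    apply eq_D_of_sig
    rcases sig_bound x1 with h' | h' <;> rcases sig_bound y1 with h'' | h'' <;> omega
  subst hx1D
  -- K : first index ≥ j where heights agree again
  have hQ : ∃ k, j ≤ k ∧ height (γ.take k) = height (w.take k) :=
    ⟨2 * n, hjle, hend _ le_rfl⟩
  obtain ⟨K, hQK, hKminj, hKle⟩ : ∃ K, (j ≤ K ∧ height (γ.take K) = height (w.take K)) ∧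
      (∀ m, m < K → ¬ (j ≤ m ∧ height (γ.take m) = height (w.take m))) ∧ K ≤ 2 * n :=
    ⟨Nat.find hQ, Nat.find_spec hQ, fun m hm => Nat.find_min hQ hm,
      Nat.find_min' hQ ⟨hjle, hend _ le_rfl⟩⟩
  have hKmin : ∀ m, j ≤ m → m < K → height (γ.take m) < height (w.take m) := by
    intro m h1 h2
    have h3 := hKminj m h2
    have h4 := hle m
    omega
  have hKj : j < K := by
    rcases Nat.lt_or_ge j K with h | h
    · exact h
    · exfalso
      have h2 : j = K := le_antisymm hQK.1 h
      apply ne_of_lt hPj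
      rw [h2]
      exact hQK.2
  have hK1 : K - 1 < γ.length := by omega
  obtain ⟨x2, hx2, f1⟩ := step_height' γ (K - 1) hK1
  obtain ⟨y2, hy2, f2⟩ := step_height' w (K - 1) (by omega)
  rw [Nat.sub_add_cancel (by omega : 0 < K)] at f1 f2
  have hstrict := hKmin (K - 1) (by omega) (by omega)
  have hgap2 := gap2 hlen hstrict
  have hKeq := hQK.2
  have hx2U : x2 = Step.U := by
    apply eq_U_of_sig
    rcases sig_bound x2 with h' | h' <;> rcases sig_bound y2 with h'' | h'' <;> omega
  subst hx2U
  -- p : first DU position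
  have hR : ∃ q, j - 1 ≤ q ∧ γ[q + 1]? = some Step.U := by
    refine ⟨K - 2, by omega, ?_⟩
    have h1 : K - 2 + 1 = K - 1 := by omega
    rw [h1]
    exact hx2
  obtain ⟨p, hRp, hpminj, hpK⟩ : ∃ p, (j - 1 ≤ p ∧ γ[p + 1]? = some Step.U) ∧
      (∀ m, m < p → ¬ (j - 1 ≤ m ∧ γ[m + 1]? = some Step.U)) ∧ p ≤ K - 2 :=
    ⟨Nat.find hR, Nat.find_spec hR, fun m hm => Nat.find_min hR hm,
      Nat.find_min' hR ⟨by omega, by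
        have h1 : K - 2 + 1 = K - 1 := by omega
        rw [h1]; exact hx2⟩⟩
  have hplen : p + 1 < γ.length := by
    obtain ⟨h1, _⟩ := List.getElem?_eq_some_iff.mp hRp.2
    exact h1
  have hpD : γ[p]? = some Step.D := by
    rcases Nat.lt_or_ge (j - 1) p with hcase | hcase
    · have hm := hpminj (p - 1) (by omega)
      have hp1 : p - 1 + 1 = p := by omega
      rw [hp1] at hm
      have hnu : γ[p]? ≠ some Step.U := fun h => hm ⟨by omega, h⟩
      have hplt : p < γ.length := by omega
      obtain ⟨xp, hxp⟩ : ∃ xp, γ[p]? = some xp :=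
        ⟨γ.get ⟨p, hplt⟩, List.getElem?_eq_getElem hplt⟩
      cases xp
      · exact absurd hxp hnu
      · exact hxp
    · have hpj : p = j - 1 := by omega
      rw [hpj]
      exact hx1
  have hdec : γ = γ.take p ++ Step.D :: Step.U :: γ.drop (p + 2) :=
    decomp_of_get? hpD hRp.2
  refine ⟨γ.take p, γ.drop (p + 2), hdec, ?_⟩
  intro i
  have hsw := height_take_swap (γ.take p) (γ.drop (p + 2)) i
  rw [← hdec] at hsw
  have hlp : (γ.take p).length = p := by
    rw [List.length_take]
    omega
  rw [hlp] at hsw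
  by_cases hi : i = p + 1
  · rw [hsw, if_pos hi, hi]
    have hmid : height (γ.take (p + 1)) + 2 ≤ height (w.take (p + 1)) := by
      apply gap2 hlen
      apply hKmin (p + 1) (by omega) (by omega)
    omega
  · rw [hsw, if_neg hi, add_zero]
    exact hle i

lemma card_above {n : ℕ} {γ : List Step} (hγ : IsGrandDyck n γ) :
    Nat.card {w : List Step // Covers (IsGrandDyck n) γ w} = countFactor Step.D Step.U γ := by
  classical
  set S := (Finset.range γ.length).filter
      (fun i => γ[i]? = some Step.D ∧ γ[i + 1]? = some Step.U) with hS
  have key : ∀ i ∈ S, γ = γ.take i ++ Step.D :: Step.U :: γ.drop (i + 2) := by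
    intro i hi
    rw [hS, Finset.mem_filter] at hi
    exact decomp_of_get? hi.2.1 hi.2.2
  have hΦ : ∀ i ∈ S, Covers (IsGrandDyck n) γ (γ.take i ++ Step.U :: Step.D :: γ.drop (i + 2)) := by
    intro i hi
    have hd := key i hi
    have hcs := covers_swap (a := γ.take i) (b := γ.drop (i + 2)) (hd ▸ hγ)
    rwa [← hd] at hcs
  set Φ : {i // i ∈ S} → {w // Covers (IsGrandDyck n) γ w} :=
    fun i => ⟨γ.take i.1 ++ Step.U :: Step.D :: γ.drop (i.1 + 2), hΦ i.1 i.2⟩ with hΦdef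
  have hinj : Function.Injective Φ := by
    rintro ⟨i1, hi1⟩ ⟨i2, hi2⟩ h
    simp only [hΦdef, Subtype.mk.injEq] at h
    have hr1 : i1 < γ.length := Finset.mem_range.mp (Finset.mem_filter.mp (hS ▸ hi1)).1
    have hr2 : i2 < γ.length := Finset.mem_range.mp (Finset.mem_filter.mp (hS ▸ hi2)).1
    have hl1 : (γ.take i1).length = i1 := by rw [List.length_take]; omega
    have hl2 : (γ.take i2).length = i2 := by rw [List.length_take]; omega
    apply Subtype.ext
    by_contra hne
    simp only at hne
    have t1 := height_take_swap (γ.take i1) (γ.drop (i1 + 2)) (i1 + 1)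
    have t2 := height_take_swap (γ.take i2) (γ.drop (i2 + 2)) (i1 + 1)
    rw [← key i1 hi1] at t1
    rw [← key i2 hi2] at t2
    rw [h] at t1
    rw [hl1] at t1
    rw [hl2] at t2
    rw [if_pos rfl] at t1
    rw [if_neg (by omega)] at t2
    omega
  have hsurj : Function.Surjective Φ := by
    rintro ⟨w, hcov⟩
    obtain ⟨hγ', hw, ⟨hle, hne⟩, hmin⟩ := hcov
    obtain ⟨a, b, hd, hzle⟩ := exists_du_between hγ' hw hle hne
    have hcovz := covers_swap (a := a) (b := b) (hd ▸ hγ')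
    rw [← hd] at hcovz
    have hz : IsGrandDyck n (a ++ Step.U :: Step.D :: b) := hcovz.2.1
    have hltz : PathLt γ (a ++ Step.U :: Step.D :: b) := hcovz.2.2.1
    have hnb := hmin _ hz
    have hwz : w = a ++ Step.U :: Step.D :: b := by
      by_cases hc : PathLe w (a ++ Step.U :: Step.D :: b)
      · apply eq_of_heights
        · have l1 : w.length = 2 * n := hw.1
          have l2 : (a ++ Step.U :: Step.D :: b).length = 2 * n := hz.1
          omega
        · intro i
          exact le_antisymm (hc i) (hzle i)
      · exact absurd ⟨hltz, ⟨hzle, hc⟩⟩ hnb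
    have hget := get?_of_decomp a b Step.D Step.U
    rw [← hd] at hget
    have halen : a.length + 1 < γ.length := by
      obtain ⟨h1, _⟩ := List.getElem?_eq_some_iff.mp hget.2
      exact h1
    have hmem : a.length ∈ S := by
      rw [hS, Finset.mem_filter, Finset.mem_range]
      exact ⟨by omega, hget.1, hget.2⟩
    refine ⟨⟨a.length, hmem⟩, ?_⟩
    apply Subtype.ext
    simp only [hΦdef]
    have h1 : γ.take a.length = a := by rw [hd]; exact List.take_left
    have h2 : γ.drop (a.length + 2) = b := by
      rw [hd]
      have e : a ++ Step.D :: Step.U :: b = (a ++ [Step.D, Step.U]) ++ b := by simp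
      rw [e]
      have hl : (a ++ [Step.D, Step.U]).length = a.length + 2 := by simp
      rw [← hl, List.drop_left]
    rw [h1, h2, hwz]
  have hcard : Nat.card {w // Covers (IsGrandDyck n) γ w} = Nat.card {i // i ∈ S} :=
    Nat.card_congr (Equiv.ofBijective Φ ⟨hinj, hsurj⟩).symm
  rw [hcard, Nat.card_eq_finsetCard]
  rfl

/-- Flip a step upside-down. -/
def flip : Step → Step
  | Step.U => Step.D
  | Step.D => Step.U

lemma flip_flip (s : Step) : flip (flip s) = s := by cases s <;> rfl

lemma flip_inj : Function.Injective flip := by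
  intro a b h
  cases a <;> cases b <;> simp_all [flip]

lemma flipW_flipW (w : List Step) : (w.map flip).map flip = w := by
  rw [List.map_map]
  have : flip ∘ flip = id := funext flip_flip
  rw [this, List.map_id]

lemma height_flip (w : List Step) : height (w.map flip) = - height w := by
  have h1 : (w.map flip).count Step.U = w.count Step.D := by
    have := List.count_map_of_injective w flip flip_inj Step.D
    simpa [flip] using this
  have h2 : (w.map flip).count Step.D = w.count Step.U := by
    have := List.count_map_of_injective w flip flip_inj Step.U
    simpa [flip] using this
  unfold height
  rw [h1, h2]
  ring

lemma height_take_flip (u : List Step) (i : ℕ) :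
    height ((u.map flip).take i) = - height (u.take i) := by
  rw [← List.map_take, height_flip]

lemma pathle_flip {w w' : List Step} : PathLe (w.map flip) (w'.map flip) ↔ PathLe w' w := by
  constructor
  · intro h i
    have := h i
    rw [height_take_flip, height_take_flip] at this
    omega
  · intro h i
    rw [height_take_flip, height_take_flip]
    have := h i
    omega

lemma grandDyck_flip {n : ℕ} {w : List Step} (h : IsGrandDyck n w) :
    IsGrandDyck n (w.map flip) := by
  obtain ⟨h1, h2⟩ := h
  have hc := count_total w
  constructor
  · simpa using h1
  · have := List.count_map_of_injective w flip flip_inj Step.D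
    have hfd : flip Step.D = Step.U := rfl
    rw [hfd] at this
    rw [this]
    omega

lemma covers_flip {n : ℕ} {w w' : List Step} (h : Covers (IsGrandDyck n) w w') :
    Covers (IsGrandDyck n) (w'.map flip) (w.map flip) := by
  obtain ⟨h1, h2, ⟨hle, hne⟩, hmin⟩ := h
  refine ⟨grandDyck_flip h2, grandDyck_flip h1,
    ⟨pathle_flip.mpr hle, fun hc => hne (pathle_flip.mp hc)⟩, ?_⟩
  rintro z hz ⟨⟨hz1, hz2⟩, ⟨hz3, hz4⟩⟩
  apply hmin (z.map flip) (grandDyck_flip hz)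
  refine ⟨⟨?_, ?_⟩, ⟨?_, ?_⟩⟩
  · have h' := pathle_flip.mpr hz3
    rwa [flipW_flipW] at h'
  · intro hcon
    apply hz4
    have h' := pathle_flip.mpr hcon
    rwa [flipW_flipW] at h'
  · have h' := hz1
    rw [← flipW_flipW z] at h'
    exact pathle_flip.mp h'
  · intro hcon
    apply hz2
    have h' := pathle_flip.mpr hcon
    rwa [flipW_flipW] at h'
  
lemma countFactor_flip (γ : List Step) :
    countFactor Step.U Step.D γ = countFactor Step.D Step.U (γ.map flip) := by
  unfold countFactor
  rw [List.length_map]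
  congr 1
  apply Finset.filter_congr
  intro i _
  have k : ∀ (j : ℕ) (x : Step), (γ.map flip)[j]? = some x ↔ γ[j]? = some (flip x) := by
    intro j x
    rw [List.getElem?_map]
    cases h : γ[j]?
    · simp
    · rename_i a
      simp only [Option.map_some]
      constructor
      · intro he
        have := Option.some.inj he
        rw [← this, flip_flip]
      · intro he
        have := Option.some.inj he
        rw [this, flip_flip]
  rw [k, k]
  have hfd : flip Step.D = Step.U := rfl
  have hfu : flip Step.U = Step.D := rfl
  rw [hfd, hfu]

lemma card_below {n : ℕ} {γ : List Step} (hγ : IsGrandDyck n γ) :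
    Nat.card {w : List Step // Covers (IsGrandDyck n) w γ} = countFactor Step.U Step.D γ := by
  have e : {w : List Step // Covers (IsGrandDyck n) w γ} ≃
      {w : List Step // Covers (IsGrandDyck n) (γ.map flip) w} :=
    { toFun := fun w => ⟨w.1.map flip, covers_flip w.2⟩
      invFun := fun w => ⟨w.1.map flip, by
        have h' := covers_flip w.2
        rwa [flipW_flipW] at h'⟩
      left_inv := fun w => Subtype.ext (flipW_flipW w.1)
      right_inv := fun w => Subtype.ext (flipW_flipW w.1) }
  rw [Nat.card_congr e, card_above (grandDyck_flip hγ), ← countFactor_flip]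

end GDaux

/-- In the Grand Dyck lattice `GD_n`, the number of paths covering a Grand Dyck path `γ`
equals the number of occurrences of the factor `DU` in `γ`, and the number of paths
covered by `γ` equals the number of occurrences of the factor `UD` in `γ`. -/
theorem grandDyck_delta_nabla (n : ℕ) (γ : List Step) (hγ : IsGrandDyck n γ) :
    Nat.card {w : List Step // Covers (IsGrandDyck n) γ w} = countFactor Step.D Step.U γ ∧
    Nat.card {w : List Step // Covers (IsGrandDyck n) w γ} = countFactor Step.U Step.D γ := by
  exact ⟨GDaux.card_above hγ, GDaux.card_below hγ⟩
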